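/- Let H be a complex Hilbert space and let (v_n)_{n=1}^∞ be a total sequence in H. For n ≥ 1 let H_n denote the closure of the linear span of {v_k : k ≥ n}. Then there exists a sequence (u_n)_{n=1}^∞ in H such that: u_n ∈ H_{⌈n/2⌉} for every n; ⟨u_m, u_n⟩ = 0 for all m ≠ n; ‖u_n‖ ∈ {0, 1} for every n; and the closed linear span of {u_n : n ≥ 1} equals H. -/

import Mathlib

set_option maxHeartbeats 1000000
set_option synthInstance.maxHeartbeats 100000

open Submodule

theorem aux_mem_orthogonal_span {H : Type*} [NormedAddCommGroup H] [InnerProductSpace ℂ H]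
    {s : Set H} {x : H} (h : ∀ y ∈ s, (inner ℂ y x : ℂ) = 0) :
    x ∈ (Submodule.span ℂ s)ᗮ := by
  rw [Submodule.mem_orthogonal]
  intro u hu
  induction hu using Submodule.span_induction with
  | mem y hy => exact h y hy
  | zero => simp
  | add a b _ _ ha hb => simp [inner_add_left, ha, hb]
  | smul a y _ hy => simp [inner_smul_left, hy]

theorem aux_orthogonal_closure {H : Type*} [NormedAddCommGroup H] [InnerProductSpace ℂ H]
    [CompleteSpace H] (K : Submodule ℂ H) : K.topologicalClosureᗮ = Kᗮ := by
  rw [← Submodule.orthogonal_orthogonal_eq_closure, Submodule.triorthogonal_eq_orthogonal]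

/-- If `(v n)_{n ≥ 1}` is a total sequence in a complex Hilbert space `H` and `H n` denotes
the closed linear span of `{v k : k ≥ n}`, then there is a sequence `(u n)_{n ≥ 1}` of
pairwise orthogonal vectors, each of norm 0 or 1, with total closed linear span, such that
`u n ∈ H ⌈n/2⌉` for every `n ≥ 1`.  (In ℕ, `⌈n/2⌉ = (n + 1) / 2`.) -/
theorem total_sequence_exists_adapted_orthonormal_family
    {H : Type*} [NormedAddCommGroup H] [InnerProductSpace ℂ H] [CompleteSpace H]
    (v : ℕ → H)
    (hv : (Submodule.span ℂ (v '' {k | 1 ≤ k})).topologicalClosure = ⊤) :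
    ∃ u : ℕ → H,
      (∀ n, 1 ≤ n →
        u n ∈ (Submodule.span ℂ (v '' {k | 1 ≤ k ∧ (n + 1) / 2 ≤ k})).topologicalClosure) ∧
      (∀ m n, 1 ≤ m → 1 ≤ n → m ≠ n → (inner ℂ (u m) (u n) : ℂ) = 0) ∧
      (∀ n, 1 ≤ n → ‖u n‖ = 0 ∨ ‖u n‖ = 1) ∧
      (Submodule.span ℂ (u '' {n | 1 ≤ n})).topologicalClosure = ⊤ := by
  classical
  -- the tail subspaces
  set S : ℕ → Submodule ℂ H :=
    fun m => (Submodule.span ℂ (v '' {k | 1 ≤ k ∧ m ≤ k})).topologicalClosure with hSdef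
  have hS1 : S 1 = ⊤ := by
    have h : v '' {k | 1 ≤ k ∧ 1 ≤ k} = v '' {k | 1 ≤ k} := by
      ext k; simp
    show (Submodule.span ℂ (v '' {k | 1 ≤ k ∧ 1 ≤ k})).topologicalClosure = ⊤
    rw [h, hv]
  have hSmono : ∀ {a b : ℕ}, a ≤ b → S b ≤ S a := by
    intro a b hab
    exact Submodule.topologicalClosure_mono (Submodule.span_mono
      (Set.image_mono fun k hk => ⟨hk.1, hab.trans hk.2⟩))
  have hvS : ∀ k m : ℕ, 1 ≤ k → m ≤ k → v k ∈ S m := fun k m h1 h2 =>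
    Submodule.le_topologicalClosure _ (Submodule.subset_span ⟨k, ⟨h1, h2⟩, rfl⟩)
  -- the one-dimensional pieces
  set w : ℕ → H := fun n => v n - (orthogonalProjection (S (n + 1)) (v n) : H) with hwdef
  have hwS : ∀ n, 1 ≤ n → w n ∈ S n := fun n hn =>
    sub_mem (hvS n n hn le_rfl)
      (hSmono (Nat.le_succ n) (orthogonalProjection (S (n + 1)) (v n)).2)
  have hwO : ∀ n, w n ∈ (S (n + 1))ᗮ := fun n =>
    Submodule.sub_starProjection_mem_orthogonal (K := S (n + 1)) (v n)
  set e : ℕ → H := fun n => (‖w n‖ : ℂ)⁻¹ • w n with hedef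
  have heS : ∀ n, 1 ≤ n → e n ∈ S n := fun n hn => Submodule.smul_mem _ _ (hwS n hn)
  -- the span of the one-dimensional pieces
  set E : Submodule ℂ H := Submodule.span ℂ (w '' {n | 1 ≤ n}) with hEdef
  have hwE : ∀ n, 1 ≤ n → w n ∈ E := fun n hn => Submodule.subset_span ⟨n, hn, rfl⟩
  -- the key induction: everything orthogonal to E lies in every tail subspace
  have key : ∀ x ∈ Eᗮ, ∀ m, 1 ≤ m → x ∈ S m := by
    intro x hx m hm
    induction m, hm using Nat.le_induction with
    | base => rw [hS1]; trivial
    | succ m hm ih =>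
      -- the continuous map y ↦ y - proj y
      set q : H →L[ℂ] H :=
        ContinuousLinearMap.id ℂ H - (S (m + 1)).subtypeL.comp (orthogonalProjection (S (m + 1)))
        with hqdef
      have hq_apply : ∀ y, q y = y - (orthogonalProjection (S (m + 1)) y : H) := by
        intro y; simp [hqdef]
      have h1 : Submodule.span ℂ (v '' {k | 1 ≤ k ∧ m ≤ k}) ≤
          (Submodule.span ℂ {w m}).comap (q : H →ₗ[ℂ] H) := by
        rw [Submodule.span_le]
        rintro _ ⟨k, ⟨hk1, hkm⟩, rfl⟩
        have : q (v k) ∈ Submodule.span ℂ {w m} := by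
          rcases eq_or_lt_of_le hkm with rfl | hlt
          · rw [hq_apply]
            exact Submodule.subset_span rfl
          · have hk : v k ∈ S (m + 1) := hvS k (m + 1) hk1 hlt
            rw [hq_apply, show ((orthogonalProjection (S (m + 1)) (v k) : H)) = v k from Submodule.starProjection_eq_self_iff.mpr hk, sub_self]
            exact zero_mem _
        exact this
      have hclosed : IsClosed ((Submodule.span ℂ ({w m} : Set H)).comap (q : H →ₗ[ℂ] H) : Set H) := by
        have h2 : IsClosed ((Submodule.span ℂ ({w m} : Set H)) : Set H) :=
          (Submodule.span ℂ ({w m} : Set H)).closed_of_finiteDimensional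
        exact h2.preimage q.continuous
      have h3 : S m ≤ (Submodule.span ℂ {w m}).comap (q : H →ₗ[ℂ] H) :=
        Submodule.topologicalClosure_minimal _ h1 hclosed
      have hq : q x ∈ Submodule.span ℂ {w m} := h3 ih
      obtain ⟨a, ha⟩ := Submodule.mem_span_singleton.mp hq
      set p : H := (orthogonalProjection (S (m + 1)) x : H) with hpdef
      have hxp : x - p = a • w m := by rw [hpdef, ← hq_apply, ← ha]
      have hin1 : (inner ℂ (x - p) x : ℂ) = 0 := by
        rw [hxp, inner_smul_left]
        have : (inner ℂ (w m) x : ℂ) = 0 :=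
          (Submodule.mem_orthogonal _ _).mp hx (w m) (hwE m hm)
        rw [this, mul_zero]
      have hin2 : (inner ℂ (x - p) p : ℂ) = 0 := by
        have hmem : x - p ∈ (S (m + 1))ᗮ :=
          Submodule.sub_starProjection_mem_orthogonal (K := S (m + 1)) x
        exact (Submodule.mem_orthogonal' _ _).mp hmem p
          (orthogonalProjection (S (m + 1)) x).2
      have : (inner ℂ (x - p) (x - p) : ℂ) = 0 := by
        rw [inner_sub_right, hin1, hin2, sub_zero]
      have hxeq : x - p = 0 := inner_self_eq_zero.mp this
      have : x = p := by rwa [sub_eq_zero] at hxeq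
      rw [this]
      exact (orthogonalProjection (S (m + 1)) x).2
  -- the remaining part
  haveI hEc : CompleteSpace ↥Eᗮ := E.isClosed_orthogonal.completeSpace_coe
  set c : ℕ → H := fun k => (orthogonalProjection Eᗮ (v (k + 1)) : H) with hcdef
  have hcE : ∀ k, c k ∈ Eᗮ := fun k => (orthogonalProjection Eᗮ (v (k + 1))).2
  set g : ℕ → H := InnerProductSpace.gramSchmidt ℂ c with hgdef
  set f : ℕ → H := InnerProductSpace.gramSchmidtNormed ℂ c with hfdef
  have hfg : ∀ k, f k = (‖g k‖ : ℂ)⁻¹ • g k := fun k => rfl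
  have hgE : ∀ k, g k ∈ Eᗮ := by
    intro k
    have : g k ∈ Submodule.span ℂ (c '' Set.Iic k) := InnerProductSpace.gramSchmidt_mem_span ℂ c le_rfl
    have hle : Submodule.span ℂ (c '' Set.Iic k) ≤ Eᗮ := by
      rw [Submodule.span_le]
      rintro _ ⟨j, -, rfl⟩
      exact hcE j
    exact hle this
  have hfE : ∀ k, f k ∈ Eᗮ := fun k => by
    rw [hfg]; exact Submodule.smul_mem _ _ (hgE k)
  -- definition of u
  refine ⟨fun n => if n % 2 = 1 then e ((n + 1) / 2) else if n = 0 then 0 else f (n / 2 - 1),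
    ?_, ?_, ?_, ?_⟩
  · -- membership
    intro n hn
    show _ ∈ S ((n + 1) / 2)
    beta_reduce
    by_cases hpar : n % 2 = 1
    · rw [if_pos hpar]
      exact heS _ (by omega)
    · rw [if_neg hpar, if_neg (by omega : ¬ n = 0)]
      exact key _ (hfE _) _ (by omega)
  · -- orthogonality
    have hwOrth : ∀ i j, 1 ≤ i → i < j → (inner ℂ (w i) (w j) : ℂ) = 0 := by
      intro i j _ hij
      exact (Submodule.mem_orthogonal' _ _).mp (hwO i) (w j) (hSmono hij (hwS j (by omega)))
    have heOrth : ∀ i j, 1 ≤ i → 1 ≤ j → i ≠ j → (inner ℂ (e i) (e j) : ℂ) = 0 := by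
      intro i j hi hj hij
      rw [hedef]
      simp only [inner_smul_left, inner_smul_right]
      rcases lt_or_gt_of_ne hij with h | h
      · rw [hwOrth i j hi h]; ring
      · rw [inner_eq_zero_symm.mp (hwOrth j i hj h)]; ring
    have hfOrth : ∀ i j, i ≠ j → (inner ℂ (f i) (f j) : ℂ) = 0 := by
      intro i j hij
      rw [hfg, hfg]
      simp only [inner_smul_left, inner_smul_right]
      rw [InnerProductSpace.gramSchmidt_orthogonal ℂ c hij]; ring
    have hef : ∀ i j, 1 ≤ i → (inner ℂ (e i) (f j) : ℂ) = 0 := by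
      intro i j hi
      have heE : e i ∈ E := Submodule.smul_mem _ _ (hwE i hi)
      exact (Submodule.mem_orthogonal _ _).mp (hfE j) (e i) heE
    intro m n hm hn hmn
    beta_reduce
    by_cases hpm : m % 2 = 1 <;> by_cases hpn : n % 2 = 1
    · rw [if_pos hpm, if_pos hpn]
      exact heOrth _ _ (by omega) (by omega) (by omega)
    · rw [if_pos hpm, if_neg hpn, if_neg (by omega : ¬ n = 0)]
      exact hef _ _ (by omega)
    · rw [if_neg hpm, if_pos hpn, if_neg (by omega : ¬ m = 0)]
      exact inner_eq_zero_symm.mp (hef _ _ (by omega))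
    · rw [if_neg hpm, if_neg hpn, if_neg (by omega : ¬ m = 0), if_neg (by omega : ¬ n = 0)]
      exact hfOrth _ _ (by omega)
  · -- norms
    intro n hn
    beta_reduce
    by_cases hpar : n % 2 = 1
    · rw [if_pos hpar]
      by_cases hw0 : w ((n + 1) / 2) = 0
      · left; rw [hedef]; simp [hw0]
      · right; rw [hedef]; exact norm_smul_inv_norm hw0
    · rw [if_neg hpar, if_neg (by omega : ¬ n = 0)]
      by_cases hf0 : f (n / 2 - 1) = 0
      · left; rw [hf0, norm_zero]
      · right; exact InnerProductSpace.gramSchmidtNormed_unit_length' hf0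
  · -- totality
    rw [Submodule.topologicalClosure_eq_top_iff, Submodule.eq_bot_iff]
    intro x hx
    rw [Submodule.mem_orthogonal] at hx
    have hx' : ∀ n : ℕ, 1 ≤ n →
        (inner ℂ (if n % 2 = 1 then e ((n + 1) / 2) else if n = 0 then 0 else f (n / 2 - 1)) x : ℂ)
          = 0 := by
      intro n hn
      exact hx _ (Submodule.subset_span ⟨n, hn, rfl⟩)
    have he' : ∀ k, 1 ≤ k → (inner ℂ (e k) x : ℂ) = 0 := by
      intro k hk
      have := hx' (2 * k - 1) (by omega)
      rw [if_pos (by omega : (2 * k - 1) % 2 = 1),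
        (by omega : (2 * k - 1 + 1) / 2 = k)] at this
      exact this
    have hw' : ∀ k, 1 ≤ k → (inner ℂ (w k) x : ℂ) = 0 := by
      intro k hk
      by_cases hw0 : w k = 0
      · rw [hw0, inner_zero_left]
      · have hwk : w k = (‖w k‖ : ℂ) • e k := by
          rw [hedef]
          simp only [smul_smul]
          rw [mul_inv_cancel₀ (by exact_mod_cast norm_ne_zero_iff.mpr hw0), one_smul]
        rw [hwk, inner_smul_left, he' k hk, mul_zero]
    have hxE : x ∈ Eᗮ := by
      rw [hEdef]
      refine aux_mem_orthogonal_span ?_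
      rintro _ ⟨k, hk, rfl⟩
      exact hw' k hk
    have hf' : ∀ k, (inner ℂ (f k) x : ℂ) = 0 := by
      intro k
      have := hx' (2 * k + 2) (by omega)
      rw [if_neg (by omega : ¬ (2 * k + 2) % 2 = 1), if_neg (by omega : ¬ 2 * k + 2 = 0),
        (by omega : (2 * k + 2) / 2 - 1 = k)] at this
      exact this
    have hg' : ∀ k, (inner ℂ (g k) x : ℂ) = 0 := by
      intro k
      by_cases hg0 : g k = 0
      · rw [hg0, inner_zero_left]
      · have hgk : g k = (‖g k‖ : ℂ) • f k := by
          rw [hfg, smul_smul, mul_inv_cancel₀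
            (by exact_mod_cast norm_ne_zero_iff.mpr hg0), one_smul]
        rw [hgk, inner_smul_left, hf' k, mul_zero]
    have hc' : ∀ k, (inner ℂ (c k) x : ℂ) = 0 := by
      intro k
      have hxg : x ∈ (Submodule.span ℂ (Set.range g))ᗮ := by
        refine aux_mem_orthogonal_span ?_
        rintro _ ⟨k, rfl⟩
        exact hg' k
      have hck : c k ∈ Submodule.span ℂ (Set.range g) := by
        rw [hgdef, InnerProductSpace.span_gramSchmidt ℂ c]
        exact Submodule.subset_span ⟨k, rfl⟩
      exact (Submodule.mem_orthogonal _ _).mp hxg (c k) hck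
    have hv' : ∀ k, 1 ≤ k → (inner ℂ (v k) x : ℂ) = 0 := by
      intro k hk
      have hk1 : k - 1 + 1 = k := by omega
      have hd : v k - c (k - 1) ∈ Eᗮᗮ := by
        show v k - (orthogonalProjection Eᗮ (v (k - 1 + 1)) : H) ∈ Eᗮᗮ
        rw [hk1]
        exact Submodule.sub_starProjection_mem_orthogonal (v k)
      have hdx : (inner ℂ (v k - c (k - 1)) x : ℂ) = 0 :=
        inner_eq_zero_symm.mp ((Submodule.mem_orthogonal Eᗮ _).mp hd x hxE)
      have hsplit : (inner ℂ (v k) x : ℂ)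
          = inner ℂ (c (k - 1)) x + (inner ℂ (v k - c (k - 1)) x : ℂ) := by
        rw [← inner_add_left]
        congr 1
        abel
      rw [hsplit, hc' (k - 1), hdx, add_zero]
    have hxv : x ∈ (Submodule.span ℂ (v '' {k | 1 ≤ k}))ᗮ := by
      refine aux_mem_orthogonal_span ?_
      rintro _ ⟨k, hk, rfl⟩
      exact hv' k hk
    have hbot : (Submodule.span ℂ (v '' {k | 1 ≤ k}))ᗮ = ⊥ :=
      Submodule.topologicalClosure_eq_top_iff.mp hv
    rw [hbot] at hxv
    exact hxv
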